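/- Consider the three-point birth-death chain on V = {1,2,3} with edge weights w(1,2) = 10, w(2,3) = 1, w(1,3) = 0 and measure m(1) = 1/ε, m(2) = 1, m(3) = 1/20, with transition rates P(x,y) = w(x,y)/m(x). Define f_ε(1) = ε, f_ε(2) = 1, f_ε(3) = −log ε. Then as ε → 0⁺, the ratio E(f_ε, log f_ε)/Ent(f_ε) tends to 0, where E(f,g) = Σ_{x,y} w(x,y)(f(y)−f(x))(g(y)−g(x))/2 (up to normalization) and Ent is computed with respect to the normalized measure. In particular, there exist constants c, C > 0 such that for all sufficiently small ε: Ent(f_ε) ≥ c(log(1/ε))² and E(f_ε, log f_ε) ≤ C·log(1/ε)·log log(1/ε). -/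

import Mathlib

open Finset Real Filter

/-- Symmetric edge weights of the three-point birth-death chain:
`w(1,2) = 10`, `w(2,3) = 1`, `w(1,3) = 0` (vertices indexed `0,1,2`). -/
noncomputable def w8 : Fin 3 → Fin 3 → ℝ := ![![0, 10, 0], ![10, 0, 1], ![0, 1, 0]]

/-- The measure `m(1) = 1/ε`, `m(2) = 1`, `m(3) = 1/20`. -/
noncomputable def m8 (ε : ℝ) : Fin 3 → ℝ := ![1 / ε, 1, 1 / 20]

/-- The test function `f(1) = ε`, `f(2) = 1`, `f(3) = -log ε`. -/
noncomputable def f8 (ε : ℝ) : Fin 3 → ℝ := ![ε, 1, -Real.log ε]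

/-- The Dirichlet form `E(f, log f) = (1/2) ∑_{x,y} w(x,y)(f(y)-f(x))(log f(y) - log f(x))`. -/
noncomputable def dirich8 (ε : ℝ) : ℝ :=
  (1 / 2) * ∑ x, ∑ y, w8 x y * (f8 ε y - f8 ε x) * (Real.log (f8 ε y) - Real.log (f8 ε x))

/-- The (normalization-invariant) entropy
`Ent(f) = ∑_x m(x) f(x) log f(x) - (∑_x m(x) f(x)) log((∑_x m(x) f(x))/m(V))`. -/
noncomputable def ent8 (ε : ℝ) : ℝ :=
  (∑ x, m8 ε x * f8 ε x * Real.log (f8 ε x)) -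
    (∑ x, m8 ε x * f8 ε x) * Real.log ((∑ x, m8 ε x * f8 ε x) / (∑ x, m8 ε x))

noncomputable def D8 (l : ℝ) : ℝ := 10*(1 - Real.exp (-l))*l + (l-1)*Real.log l
noncomputable def E8 (l : ℝ) : ℝ :=
  -l + l*Real.log l/20 + (2 + l/20)*(l + Real.log (1 + (21/20)*Real.exp (-l)) - Real.log (2 + l/20))

lemma dirich_eq (ε : ℝ) (h0 : 0 < ε) : dirich8 ε = D8 (-Real.log ε) := by
  simp [dirich8, D8, w8, f8, Fin.sum_univ_three, neg_neg, Real.exp_log h0]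
  ring

lemma ent_eq (ε : ℝ) (h0 : 0 < ε) (h1 : ε < 1) : ent8 ε = E8 (-Real.log ε) := by
  have hl : 0 < -Real.log ε := by
    have := Real.log_neg h0 h1; linarith
  have hS : (0:ℝ) < 2 + (-Real.log ε)/20 := by linarith
  have hM : (0:ℝ) < 1/ε + 1 + 1/20 := by positivity
  have hM' : 1/ε + 1 + 1/20 = (1 + (21/20)*ε)/ε := by field_simp; ring
  have h21 : (0:ℝ) < 1 + (21/20)*ε := by linarith
  simp only [ent8, E8, m8, f8, Fin.sum_univ_three]
  simp only [Matrix.cons_val_zero, Matrix.cons_val_one, Matrix.head_cons, Matrix.cons_val_two,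
    Matrix.tail_cons]
  rw [Real.log_div (by positivity) (by positivity)]
  have e1 : 1/ε * ε = 1 := by field_simp
  rw [show 1/ε * ε + 1 * 1 + 1/20 * (-Real.log ε) = 2 + (-Real.log ε)/20 by rw [e1]; ring]
  rw [show 1/ε + 1 + 1/20 = (1 + (21/20)*ε)/ε from hM']
  rw [Real.log_div (by positivity) (ne_of_gt h0), neg_neg, Real.exp_log h0]
  simp [Real.log_one]
  field_simp
  ring

lemma hlogdiv : Tendsto (fun x : ℝ => Real.log x / x) atTop (nhds 0) :=
  Real.isLittleO_log_id_atTop.tendsto_div_nhds_zero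

lemma hinv : Tendsto (fun x : ℝ => 1 / x) atTop (nhds 0) := by
  simpa [one_div] using (tendsto_inv_atTop_zero : Tendsto (fun x : ℝ => x⁻¹) atTop (nhds 0))

lemma hu_top : Tendsto (fun l : ℝ => 2 + l/20) atTop atTop :=
  tendsto_atTop_add_const_left _ 2 (Tendsto.atTop_div_const (by norm_num) tendsto_id)

lemma hexp0 : Tendsto (fun l : ℝ => Real.exp (-l)) atTop (nhds 0) :=
  Real.tendsto_exp_atBot.comp tendsto_neg_atTop_atBot

lemma hA0 : Tendsto (fun l : ℝ => Real.log (1 + (21/20)*Real.exp (-l))) atTop (nhds 0) := by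
  have : Tendsto (fun l : ℝ => 1 + (21/20)*Real.exp (-l)) atTop (nhds 1) := by
    simpa using (tendsto_const_nhds (x := (1:ℝ)) (f := atTop)).add
      ((tendsto_const_nhds (x := (21/20:ℝ))).mul hexp0)
  simpa using this.log one_ne_zero

lemma hD : Tendsto (fun l => D8 l / l^2) atTop (nhds 0) := by
  have h : Tendsto (fun l : ℝ => 10*(1 - Real.exp (-l))*(1/l) + (1 - 1/l)*(Real.log l/l))
      atTop (nhds 0) := by
    have h1 : Tendsto (fun l : ℝ => 10*(1 - Real.exp (-l))) atTop (nhds 10) := by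
      simpa using (tendsto_const_nhds (x := (10:ℝ)) (f := atTop)).mul
        ((tendsto_const_nhds (x := (1:ℝ))).sub hexp0)
    have h2 : Tendsto (fun l : ℝ => 1 - 1/l) atTop (nhds 1) := by
      simpa using (tendsto_const_nhds (x := (1:ℝ)) (f := atTop)).sub hinv
    simpa using (h1.mul hinv).add (h2.mul hlogdiv)
  apply h.congr'
  filter_upwards [eventually_ge_atTop (1:ℝ)] with l hl
  have hl0 : l ≠ 0 := by linarith
  unfold D8
  field_simp

lemma hE : Tendsto (fun l => E8 l / l^2) atTop (nhds (1/20)) := by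
  have h : Tendsto (fun l : ℝ => -(1/l) + (Real.log l/l)/20 + (2*(1/l) + 1/20) *
      (1 + Real.log (1 + (21/20)*Real.exp (-l)) * (1/l)
        - (Real.log (2 + l/20) / (2 + l/20)) * (2*(1/l) + 1/20))) atTop (nhds (1/20)) := by
    have hc : Tendsto (fun l : ℝ => 2*(1/l) + 1/20) atTop (nhds (1/20)) := by
      simpa using ((tendsto_const_nhds (x := (2:ℝ)) (f := atTop)).mul hinv).add
        (tendsto_const_nhds (x := (1/20:ℝ)))
    have hB : Tendsto (fun l : ℝ => Real.log (2 + l/20) / (2 + l/20)) atTop (nhds 0) :=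
      hlogdiv.comp hu_top
    have := (hinv.neg.add (hlogdiv.div_const 20)).add (hc.mul
      (((tendsto_const_nhds (x := (1:ℝ))).add (hA0.mul hinv)).sub (hB.mul hc)))
    norm_num at this ⊢
    exact this
  apply h.congr'
  filter_upwards [eventually_ge_atTop (1:ℝ)] with l hl
  have hl0 : l ≠ 0 := by linarith
  have hu : (2 + l/20) ≠ 0 := by positivity
  unfold E8
  field_simp


section aux
lemma div_div_cancel_aux (a b c : ℝ) (hc : c ≠ 0) : (a/c)/(b/c) = a/b := by
  rcases eq_or_ne b 0 with h | h
  · simp [h]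
  · field_simp

lemma hcomp8 : Tendsto (fun ε : ℝ => -Real.log ε) (nhdsWithin 0 (Set.Ioi 0)) atTop :=
  tendsto_neg_atBot_atTop.comp Real.tendsto_log_nhdsGT_zero

lemma mem01 : Set.Ioo (0:ℝ) 1 ∈ nhdsWithin (0:ℝ) (Set.Ioi 0) :=
  Ioo_mem_nhdsGT (by norm_num)
end aux

/-- On the three-point chain, `E(f_ε, log f_ε)/Ent(f_ε) → 0` as `ε → 0⁺`; in particular
there are `c, C > 0` with `Ent(f_ε) ≥ c (log(1/ε))²` and
`E(f_ε, log f_ε) ≤ C log(1/ε) log log(1/ε)` for all sufficiently small `ε > 0`. -/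
theorem three_point_mls_counterexample :
    Filter.Tendsto (fun ε => dirich8 ε / ent8 ε) (nhdsWithin 0 (Set.Ioi 0)) (nhds 0) ∧
    ∃ c C : ℝ, 0 < c ∧ 0 < C ∧ ∀ᶠ ε in nhdsWithin 0 (Set.Ioi 0),
      c * (Real.log (1 / ε)) ^ 2 ≤ ent8 ε ∧
      dirich8 ε ≤ C * Real.log (1 / ε) * Real.log (Real.log (1 / ε)) := by
  constructor
  · have h := ((hD.div hE (by norm_num)).comp hcomp8)
    norm_num at h
    apply h.congr'
    filter_upwards [mem01] with ε hε
    have hl : 0 < -Real.log ε := by have := Real.log_neg hε.1 hε.2; linarith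
    simp only [Function.comp, Pi.div_apply]
    rw [div_div_cancel_aux _ _ _ (by positivity), dirich_eq ε hε.1, ent_eq ε hε.1 hε.2]
  · refine ⟨1/40, 11, by norm_num, by norm_num, ?_⟩
    have h1 : ∀ᶠ ε in nhdsWithin (0:ℝ) (Set.Ioi 0), 1/40 ≤ E8 (-Real.log ε)/(-Real.log ε)^2 := by
      have := (hE.comp hcomp8).eventually_const_le (show (1:ℝ)/40 < 1/20 by norm_num)
      exact this
    have h2 : ∀ᶠ ε in nhdsWithin (0:ℝ) (Set.Ioi 0), -Real.log ε > Real.exp 1 :=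
      hcomp8.eventually_gt_atTop _
    filter_upwards [h1, h2, mem01] with ε hent hlog hε
    have hε0 := hε.1
    have hl : 0 < -Real.log ε := by have := Real.log_neg hε.1 hε.2; linarith
    have hlog1 : Real.log (1/ε) = -Real.log ε := by rw [one_div, Real.log_inv]
    constructor
    · rw [hlog1, ent_eq ε hε.1 hε.2]
      rw [le_div_iff₀ (by positivity : (0:ℝ) < (-Real.log ε)^2)] at hent
      linarith
    · rw [hlog1, dirich_eq ε hε.1]
      set l := -Real.log ε with hld
      have hll : 1 ≤ Real.log l := by
        rw [show (1:ℝ) = Real.log (Real.exp 1) by simp]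
        exact Real.log_le_log (Real.exp_pos 1) hlog.le
      have hexp : 0 < Real.exp (-l) := Real.exp_pos _
      have hexp1 : Real.exp (-l) < 1 := by
        rw [Real.exp_lt_one_iff]; linarith
      unfold D8
      nlinarith [mul_nonneg hl.le (sub_nonneg.mpr hll)]
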